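/- arXiv:2311.07454 — 5 statements merged into one kernel-verified Lean document; each statement's English description precedes it below -/
import Mathlib

section
/- Let X, Y, U be finite nonempty types with |U| = k, and let p : X × Y × U → ℝ be a nonnegative function satisfying conditional independence of the first two coordinates given the third: for every u ∈ U and all x ∈ X, y ∈ Y, p(x,y,u) · (Σ_{x',y'} p(x',y',u)) = (Σ_{y'} p(x,y',u)) · (Σ_{x'} p(x',y,u)). Define M : X × Y → ℝ by M(x,y) = Σ_{u ∈ U} p(x,y,u). Then there exist matrices B : X × Fin k → ℝ and C : Fin k × Y → ℝ with all entries nonnegative such that M = B ⬝ C; that is, the nonnegative rank of the probability matrix M is at most k. -/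
/-- Lemma `nnrank_independence`, nonnegative-rank form.
A `k`-mixture (over a latent class `U` with `|U| = k`) of joint distributions in each of
which the first coordinate is independent of the second has a joint probability matrix
admitting a nonnegative factorization with inner dimension `k`; i.e. its nonnegative
rank is at most `k`. -/
theorem stmt_0 {X Y U : Type*} [Fintype X] [Fintype Y] [Fintype U]
    [Nonempty X] [Nonempty Y] [Nonempty U] (k : ℕ) (hk : Fintype.card U = k)
    (p : X × Y × U → ℝ) (hp : ∀ x y u, 0 ≤ p (x, y, u))
    (hCI : ∀ u x y,
      p (x, y, u) * (∑ x', ∑ y', p (x', y', u)) =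
        (∑ y', p (x, y', u)) * (∑ x', p (x', y, u)))
    (M : Matrix X Y ℝ) (hM : ∀ x y, M x y = ∑ u, p (x, y, u)) :
    ∃ (B : Matrix X (Fin k) ℝ) (C : Matrix (Fin k) Y ℝ),
      (∀ x i, 0 ≤ B x i) ∧ (∀ i y, 0 ≤ C i y) ∧ M = B * C := by
  have e : Fin k ≃ U := (Fintype.equivFinOfCardEq hk).symm
  set s : U → ℝ := fun u => ∑ x', ∑ y', p (x', y', u) with hs
  have hs0 : ∀ u, 0 ≤ s u := fun u =>
    Finset.sum_nonneg fun _ _ => Finset.sum_nonneg fun _ _ => hp _ _ _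
  have hzero : ∀ u, s u = 0 → ∀ x y, p (x, y, u) = 0 := by
    intro u hu x y
    have h1 : ∀ x' ∈ Finset.univ, (∑ y', p (x', y', u)) = 0 :=
      (Finset.sum_eq_zero_iff_of_nonneg (fun _ _ =>
        Finset.sum_nonneg fun _ _ => hp _ _ _)).mp hu
    have h2 := (Finset.sum_eq_zero_iff_of_nonneg (fun _ _ => hp _ _ _)).mp
      (h1 x (Finset.mem_univ x))
    exact h2 y (Finset.mem_univ y)
  refine ⟨fun x i => ∑ y', p (x, y', e i),
    fun i y => if s (e i) = 0 then 0 else (∑ x', p (x', y, e i)) / s (e i),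
    fun x i => Finset.sum_nonneg fun _ _ => hp _ _ _,
    fun i y => ?_, ?_⟩
  · dsimp only
    split
    · rfl
    · exact div_nonneg (Finset.sum_nonneg fun _ _ => hp _ _ _) (hs0 _)
  · ext x y
    rw [hM]
    change _ = ∑ i, (∑ y', p (x, y', e i)) * (if s (e i) = 0 then 0 else (∑ x', p (x', y, e i)) / s (e i))
    rw [← Equiv.sum_comp e (fun u => p (x, y, u))]
    refine Finset.sum_congr rfl fun i _ => ?_
    by_cases h : s (e i) = 0
    · simp [h, hzero (e i) h x y]
    · rw [if_neg h, mul_div_assoc', eq_div_iff h]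
      simp only [hs]
      linarith [hCI (e i) x y]
end

section
/- Let X, Y, U be finite nonempty types with |U| = k, and let p : X × Y × U → ℝ be a nonnegative function satisfying conditional independence of the first two coordinates given the third: for every u ∈ U and all x ∈ X, y ∈ Y, p(x,y,u) · (Σ_{x',y'} p(x',y',u)) = (Σ_{y'} p(x,y',u)) · (Σ_{x'} p(x',y,u)). Define M : X × Y → ℝ by M(x,y) = Σ_{u ∈ U} p(x,y,u). Then the rank of M as a real matrix is at most k. -/
/-- Lemma `nnrank_independence`, ordinary-rank consequence.
A `k`-mixture (over a latent class `U` with `|U| = k`) of joint distributions in each of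
which the first coordinate is independent of the second has a joint probability matrix
of real rank at most `k`. -/
theorem stmt_1 {X Y U : Type*} [Fintype X] [Fintype Y] [Fintype U]
    [Nonempty X] [Nonempty Y] [Nonempty U] (k : ℕ) (hk : Fintype.card U = k)
    (p : X × Y × U → ℝ) (hp : ∀ x y u, 0 ≤ p (x, y, u))
    (hCI : ∀ u x y,
      p (x, y, u) * (∑ x', ∑ y', p (x', y', u)) =
        (∑ y', p (x, y', u)) * (∑ x', p (x', y, u)))
    (M : Matrix X Y ℝ) (hM : ∀ x y, M x y = ∑ u, p (x, y, u)) :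
    M.rank ≤ k := by
  classical
  set A : Matrix X U ℝ := fun x u => ∑ y', p (x, y', u) with hA
  set B : Matrix U Y ℝ := fun u y =>
    if h : (∑ x', ∑ y', p (x', y', u)) = 0 then 0
    else (∑ x', p (x', y, u)) / (∑ x', ∑ y', p (x', y', u)) with hB
  have key : ∀ u x y, A x u * B u y = p (x, y, u) := by
    intro u x y
    by_cases h : (∑ x', ∑ y', p (x', y', u)) = 0
    · have hz : p (x, y, u) = 0 := by
        have h1 : ∀ x' ∈ (Finset.univ : Finset X), (0:ℝ) ≤ ∑ y', p (x', y', u) :=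
          fun x' _ => Finset.sum_nonneg fun y' _ => hp x' y' u
        have h2 := (Finset.sum_eq_zero_iff_of_nonneg h1).mp h x (Finset.mem_univ x)
        have h3 : ∀ y' ∈ (Finset.univ : Finset Y), (0:ℝ) ≤ p (x, y', u) :=
          fun y' _ => hp x y' u
        exact (Finset.sum_eq_zero_iff_of_nonneg h3).mp h2 y (Finset.mem_univ y)
      simp [hB, h, hz]
    · have := hCI u x y
      simp only [hB, hA, dif_neg h]; rw [mul_div_assoc', div_eq_iff h]
      linarith [hCI u x y]
  have hMAB : M = A * B := by
    ext x y
    rw [hM, Matrix.mul_apply]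
    exact Finset.sum_congr rfl fun u _ => (key u x y).symm
  calc M.rank = (A * B).rank := by rw [hMAB]
    _ ≤ A.rank := Matrix.rank_mul_le_left A B
    _ ≤ Fintype.card U := Matrix.rank_le_card_width A
    _ = k := hk
end

section
/- Let G = (V, E) be a finite DAG and let V_i, V_j ∈ V be nonadjacent. Then every independence preserving augmentation (S_i⁺, S_j⁺) of (V_i, V_j) satisfies S_i⁺ ∩ IMD(V_i, V_j) = ∅ and S_j⁺ ∩ IMD(V_i, V_j) = ∅. -/
/-! Basic notions for directed graphs given by an edge relation `E` on a vertex type `V`. -/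

/-- Two vertices are adjacent if there is an edge between them in either direction. -/
def UndirAdj {V : Type*} (E : V → V → Prop) (a b : V) : Prop := E a b ∨ E b a

/-- `Descend E v w` means `w` is a descendant of `v`: it is reachable from `v`
by a directed path of length at least 1. -/
def Descend {V : Type*} (E : V → V → Prop) (v w : V) : Prop := Relation.TransGen E v w

/-- A directed graph is a DAG iff its transitive closure is irreflexive. -/
def IsDAG {V : Type*} (E : V → V → Prop) : Prop := Irreflexive (Relation.TransGen E)

/-- `f 0, f 1, …, f m` is a path: the vertices are distinct and each consecutive
pair is adjacent (in either direction). -/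
def IsPathOn {V : Type*} (E : V → V → Prop) (m : ℕ) (f : ℕ → V) : Prop :=
  (∀ i ≤ m, ∀ j ≤ m, f i = f j → i = j) ∧ ∀ i < m, UndirAdj E (f i) (f (i + 1))

/-- The interior vertex `f i` is a collider on the path `f` if both of its
neighboring path edges point into it. -/
def IsCollider {V : Type*} (E : V → V → Prop) (f : ℕ → V) (i : ℕ) : Prop :=
  E (f (i - 1)) (f i) ∧ E (f (i + 1)) (f i)

/-- The path `f 0, …, f m` is active given the conditioning set `C`: every interior
non-collider is outside `C`, and every interior collider is in `C` or has a
descendant in `C`. -/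
def ActivePath {V : Type*} (E : V → V → Prop) (C : Set V) (m : ℕ) (f : ℕ → V) : Prop :=
  IsPathOn E m f ∧ ∀ i, 0 < i → i < m →
    (¬ IsCollider E f i → f i ∉ C) ∧
    (IsCollider E f i → f i ∈ C ∨ ∃ w ∈ C, Descend E (f i) w)

/-- `C` d-separates `X` and `Y`: no path from a vertex of `X` to a vertex of `Y`
is active given `C`. -/
def DSep {V : Type*} (E : V → V → Prop) (X Y C : Set V) : Prop :=
  ∀ (m : ℕ) (f : ℕ → V), f 0 ∈ X → f m ∈ Y → ¬ ActivePath E C m f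

/-- The immoral descendants of `vi, vj`: their common children together with all
descendants of those common children. -/
def IMD {V : Type*} (E : V → V → Prop) (vi vj : V) : Set V :=
  {c | E vi c ∧ E vj c} ∪ {w | ∃ c, E vi c ∧ E vj c ∧ Descend E c w}

/-- An independence preserving augmentation (IPA) of a nonadjacent pair `(vi, vj)`:
disjoint sets `Si, Sj ⊆ V \ {vi, vj}` such that for some conditioning set `C`
disjoint from `Si ∪ {vi} ∪ Sj ∪ {vj}`, the sets `Si ∪ {vi}` and `Sj ∪ {vj}`
are d-separated given `C`. -/
def IsIPA {V : Type*} (E : V → V → Prop) (vi vj : V) (Si Sj : Set V) : Prop :=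
  Disjoint Si Sj ∧ vi ∉ Si ∧ vj ∉ Si ∧ vi ∉ Sj ∧ vj ∉ Sj ∧
  ∃ C : Set V, Disjoint C ((Si ∪ {vi}) ∪ (Sj ∪ {vj})) ∧
    DSep E (Si ∪ {vi}) (Sj ∪ {vj}) C

-- helpers
lemma no2cycle {V : Type*} {E : V → V → Prop} (hdag : IsDAG E) {a b : V}
    (h1 : E a b) (h2 : E b a) : False :=
  hdag a ((Relation.TransGen.single h1).tail h2)

lemma noloop {V : Type*} {E : V → V → Prop} (hdag : IsDAG E) {a : V} (h : E a a) : False :=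
  hdag a (Relation.TransGen.single h)

lemma walk_exists {V : Type*} {E : V → V → Prop} {c x : V} (h : Relation.TransGen E c x) :
    ∃ (n : ℕ) (g : ℕ → V), 0 < n ∧ g 0 = c ∧ g n = x ∧ ∀ i < n, E (g i) (g (i+1)) := by
  induction h with
  | single hcb =>
      rename_i b
      exact ⟨1, fun k => if k = 0 then c else b, one_pos, by simp, by simp,
        fun i hi => by interval_cases i; simpa using hcb⟩
  | tail hcb hbd ih =>
      rename_i b d
      obtain ⟨n, g, hn, h0, hnn, he⟩ := ih
      refine ⟨n+1, fun k => if k ≤ n then g k else d, by omega,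
        by simp [h0], by simp, fun i hi => ?_⟩
      by_cases hin : i < n
      · simp only [if_pos (by omega : i ≤ n), if_pos (by omega : i + 1 ≤ n)]
        exact he i hin
      · have hieq : i = n := by omega
        simp only [hieq, if_pos le_rfl, if_neg (by omega : ¬ n + 1 ≤ n), hnn]
        exact hbd

lemma walk_trans {V : Type*} {E : V → V → Prop} {n : ℕ} {g : ℕ → V}
    (he : ∀ i < n, E (g i) (g (i+1))) :
    ∀ i j, i < j → j ≤ n → Relation.TransGen E (g i) (g j) := by
  intro i j
  induction j with
  | zero => omega
  | succ k ih =>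
      intro hij hkn
      rcases Nat.lt_or_ge i k with h | h
      · exact (ih h (by omega)).tail (he k (by omega))
      · have : i = k := by omega
        subst this
        exact Relation.TransGen.single (he i (by omega))

lemma dsep_symm {V : Type*} {E : V → V → Prop} {X Y C : Set V} (h : DSep E X Y C) :
    DSep E Y X C := by
  intro m f h0 hm hact
  obtain ⟨⟨hinj, hadj⟩, hint⟩ := hact
  apply h m (fun i => f (m - i)) (by simpa) (by simpa using h0)
  refine ⟨⟨fun i hi j hj hij => ?_, fun i hi => ?_⟩, fun i hi0 him => ?_⟩
  · have := hinj (m - i) (by omega) (m - j) (by omega) hij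
    omega
  · have := hadj (m - i - 1) (by omega)
    have h1 : m - i - 1 + 1 = m - i := by omega
    have h2 : m - (i + 1) = m - i - 1 := by omega
    rw [h1] at this
    show UndirAdj E (f (m - i)) (f (m - (i + 1)))
    rw [h2]
    exact this.symm
  · have hcoll : IsCollider E (fun i => f (m - i)) i ↔ IsCollider E f (m - i) := by
      unfold IsCollider
      have h1 : m - (i - 1) = m - i + 1 := by omega
      have h2 : m - (i + 1) = m - i - 1 := by omega
      simp only [h1, h2]
      exact and_comm
    have := hint (m - i) (by omega) (by omega)
    constructor
    · intro hnc; exact this.1 (fun hc => hnc (hcoll.mpr hc))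
    · intro hc; exact this.2 (hcoll.mp hc)


lemma ipa_side {V : Type*} {E : V → V → Prop} (hdag : IsDAG E) {vi vj : V} (hne : vi ≠ vj)
    {X Y C : Set V} (hC : Disjoint C (X ∪ Y)) (hsep : DSep E X Y C)
    (hvi : vi ∈ X) (hvj : vj ∈ Y) {x c : V} (hx : x ∈ X)
    (hic : E vi c) (hjc : E vj c) (hcx : x = c ∨ Descend E c x) : False := by
  have hCmem : ∀ a, a ∈ C → a ∉ X ∪ Y := fun a ha => Set.disjoint_left.mp hC ha
  rcases hcx with rfl | hd
  · -- x is itself a common child: the length-1 path x ← vj is active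
    have hxvj : x ≠ vj := by rintro rfl; exact noloop hdag hjc
    apply hsep 1 (fun i => if i = 0 then x else vj) (by simp [hx]) (by simp [hvj])
    refine ⟨⟨fun i hi j hj hij => ?_, fun i hi => ?_⟩, fun i hi0 hi1 => by omega⟩
    · interval_cases i <;> interval_cases j <;> simp_all
    · interval_cases i
      simpa [UndirAdj] using Or.inr hjc
  · -- x is a descendant of a common child c
    have hcvi : c ≠ vi := by rintro rfl; exact noloop hdag hic
    have hcvj : c ≠ vj := by rintro rfl; exact noloop hdag hjc
    by_cases hcC : c ∈ C ∨ ∃ w ∈ C, Descend E c w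
    · -- then the length-2 path vi → c ← vj is active
      apply hsep 2 (fun i => if i = 0 then vi else if i = 1 then c else vj)
        (by simp [hvi]) (by simp [hvj])
      refine ⟨⟨fun i hi j hj hij => ?_, fun i hi => ?_⟩, fun i hi0 hi2 => ?_⟩
      · interval_cases i <;> interval_cases j <;> simp_all
      · interval_cases i
        · simpa [UndirAdj] using Or.inl hic
        · simpa [UndirAdj] using Or.inr hjc
      · have hi1 : i = 1 := by omega
        subst hi1
        have hcoll : IsCollider E (fun i => if i = 0 then vi else if i = 1 then c else vj) 1 :=
          ⟨by simpa using hic, by simpa using hjc⟩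
        refine ⟨fun hnc => absurd hcoll hnc, fun _ => ?_⟩
        simpa using hcC
    · push_neg at hcC
      obtain ⟨hcC1, hcC2⟩ := hcC
      obtain ⟨n, g, hn, h0, hnx, he⟩ := walk_exists hd
      have hgt := walk_trans he
      have hcg : ∀ k, 0 < k → k ≤ n → Relation.TransGen E c (g k) := by
        intro k hk hkn
        have := hgt 0 k hk hkn
        rwa [h0] at this
      have hgC : ∀ k ≤ n, g k ∉ C := by
        intro k hkn hkC
        rcases Nat.eq_zero_or_pos k with rfl | hk
        · rw [h0] at hkC; exact hcC1 hkC
        · exact hcC2 (g k) hkC (hcg k hk hkn)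
      have hgvj : ∀ k ≤ n, g k ≠ vj := by
        intro k hkn hkvj
        rcases Nat.eq_zero_or_pos k with rfl | hk
        · rw [h0] at hkvj; exact hcvj hkvj
        · have t : Relation.TransGen E vj (g k) := (hcg k hk hkn).head hjc
          exact hdag vj (hkvj ▸ t)
      set f : ℕ → V := fun i => if i ≤ n then g (n - i) else vj with hf
      have hfle : ∀ i ≤ n, f i = g (n - i) := fun i hi => if_pos hi
      have hftop : f (n + 1) = vj := if_neg (by omega)
      apply hsep (n + 1) f (by rw [hfle 0 (by omega)]; simpa [hnx] using hx)
        (by rw [hftop]; exact hvj)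
      refine ⟨⟨fun i hi j hj hij => ?_, fun i hi => ?_⟩, fun i hi0 hi1 => ?_⟩
      · rcases Nat.lt_or_ge i (n+1) with hi' | hi' <;> rcases Nat.lt_or_ge j (n+1) with hj' | hj'
        · rw [hfle i (by omega), hfle j (by omega)] at hij
          by_contra hne'
          rcases Nat.lt_or_ge (n-i) (n-j) with h | h
          · exact hdag _ (hij ▸ hgt (n-i) (n-j) h (by omega))
          · have h' : n - j < n - i := by omega
            exact hdag _ (hij.symm ▸ hgt (n-j) (n-i) h' (by omega))
        · have hj2 : j = n + 1 := by omega
          rw [hfle i (by omega), hj2, hftop] at hij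
          exact absurd hij (hgvj (n - i) (by omega))
        · have hi2 : i = n + 1 := by omega
          rw [hfle j (by omega), hi2, hftop] at hij
          exact absurd hij.symm (hgvj (n - j) (by omega))
        · omega
      · rcases Nat.lt_or_ge i n with hi' | hi'
        · rw [hfle i (by omega), hfle (i+1) (by omega)]
          right
          have := he (n - (i+1)) (by omega)
          have h1 : n - (i + 1) + 1 = n - i := by omega
          rwa [h1] at this
        · have hieq : i = n := by omega
          subst hieq
          rw [hfle i (le_rfl), hftop, Nat.sub_self, h0]
          exact Or.inr hjc
      · have hdown : E (f i) (f (i - 1)) := by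
          rw [hfle i (by omega), hfle (i-1) (by omega)]
          have := he (n - i) (by omega)
          have h1 : n - (i - 1) = n - i + 1 := by omega
          rw [h1]
          exact this
        have hnc : ¬ IsCollider E f i := fun hc => no2cycle hdag hdown hc.1
        refine ⟨fun _ => ?_, fun hc => absurd hc hnc⟩
        rw [hfle i (by omega)]
        exact hgC (n - i) (by omega)

/-- Lemma: IPAs avoid the immoral descendants.
In a finite DAG, every independence preserving augmentation
`(Si ∪ {vi}, Sj ∪ {vj})` of a nonadjacent pair `(vi, vj)` is disjoint from
`IMD(vi, vj)`. -/
theorem stmt_5 {V : Type*} [Fintype V] (E : V → V → Prop)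
    (hdag : IsDAG E) (vi vj : V) (hne : vi ≠ vj)
    (hnadj : ¬ UndirAdj E vi vj) (Si Sj : Set V)
    (hipa : IsIPA E vi vj Si Sj) :
    (Si ∪ {vi}) ∩ IMD E vi vj = ∅ ∧ (Sj ∪ {vj}) ∩ IMD E vi vj = ∅ := by

  obtain ⟨-, hviSi, hvjSi, hviSj, hvjSj, C, hC, hsep⟩ := hipa
  have hvi : vi ∈ Si ∪ {vi} := Set.mem_union_right _ rfl
  have hvj : vj ∈ Sj ∪ {vj} := Set.mem_union_right _ rfl
  constructor
  · ext x
    simp only [Set.mem_inter_iff, Set.mem_empty_iff_false, iff_false, not_and]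
    intro hxS hxI
    rcases hxI with ⟨hic, hjc⟩ | ⟨c, hic, hjc, hd⟩
    · exact (ipa_side hdag hne hC hsep hvi hvj hxS hic hjc (Or.inl rfl)).elim
    · exact (ipa_side hdag hne hC hsep hvi hvj hxS hic hjc (Or.inr hd)).elim
  · have hC' : Disjoint C ((Sj ∪ {vj}) ∪ (Si ∪ {vi})) := by rwa [Set.union_comm]
    have hsep' := dsep_symm hsep
    ext x
    simp only [Set.mem_inter_iff, Set.mem_empty_iff_false, iff_false, not_and]
    intro hxS hxI
    rcases hxI with ⟨hic, hjc⟩ | ⟨c, hic, hjc, hd⟩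
    · exact (ipa_side hdag hne.symm hC' hsep' hvj hvi hxS hjc hic (Or.inl rfl)).elim
    · exact (ipa_side hdag hne.symm hC' hsep' hvj hvi hxS hjc hic (Or.inr hd)).elim
end

section
/- Let G = (V, E) be a finite DAG in which every vertex has degree at most Δ, and let V_i, V_j ∈ V be nonadjacent. Let A_ij = V \ (DE(V_i) ∩ DE(V_j)). For every integer s ≥ 1, if |A_ij| ≥ (2 + Δ²)(s + 1), then there exists an independence preserving augmentation (S_i ∪ {V_i}, S_j ∪ {V_j}) of (V_i, V_j) with |S_i| = |S_j| = s and with S_i ∪ {V_i} and S_j ∪ {V_j} both contained in A_ij. -/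
/-! ### Auxiliary lemmas -/

/-- Symmetry of the "conflict" relation (adjacency or common child). -/
private lemma conf_symm {V : Type*} (E : V → V → Prop) {a b : V}
    (h : UndirAdj E a b ∨ ∃ c, E a c ∧ E b c) :
    UndirAdj E b a ∨ ∃ c, E b c ∧ E a c := by
  rcases h with (h | h) | ⟨c, h1, h2⟩
  · exact Or.inl (Or.inr h)
  · exact Or.inl (Or.inl h)
  · exact Or.inr ⟨c, h2, h1⟩

/-- The key blocking lemma: if `P` and `Q` are disjoint, both disjoint from the
descendant-closed set `M`, cross pairs are nonadjacent, and every cross common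
child lies in `M`, then the complement of `P ∪ Q ∪ M` d-separates `P` and `Q`. -/
private lemma blocked_dsep {V : Type*} (E : V → V → Prop) (hdag : IsDAG E)
    (P Q M : Set V)
    (hPQ : ∀ v ∈ P, v ∉ Q)
    (hPM : ∀ v ∈ P, v ∉ M) (hQM : ∀ v ∈ Q, v ∉ M)
    (hclosed : ∀ u ∈ M, ∀ w, Descend E u w → w ∈ M)
    (hadj : ∀ a ∈ P, ∀ b ∈ Q, ¬ UndirAdj E a b)
    (hcc : ∀ a ∈ P, ∀ b ∈ Q, ∀ c, E a c → E b c → c ∈ M) :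
    DSep E P Q (P ∪ Q ∪ M)ᶜ := by
  classical
  intro m f hf0 hfm hact
  obtain ⟨⟨_, hstep⟩, hint⟩ := hact
  have hex : ∃ t, f t ∈ Q := ⟨m, hfm⟩
  obtain ⟨t, htm, ht, htmin⟩ : ∃ t, t ≤ m ∧ f t ∈ Q ∧ ∀ r < t, f r ∉ Q :=
    ⟨Nat.find hex, Nat.find_min' hex hfm, Nat.find_spec hex,
      fun r hr => Nat.find_min hex hr⟩
  have ht0 : t ≠ 0 := fun h => hPQ _ hf0 (by rwa [h] at ht)
  obtain ⟨k, hkt, hk, hkmax⟩ : ∃ k, k < t ∧ f k ∈ P ∧ ∀ r, k < r → r < t → f r ∉ P := by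
    refine ⟨Nat.findGreatest (fun i => f i ∈ P) (t - 1), ?_,
      Nat.findGreatest_spec (P := fun i => f i ∈ P) (Nat.zero_le _) hf0, ?_⟩
    · have := Nat.findGreatest_le (P := fun i => f i ∈ P) (t - 1); omega
    · intro r h1 h2
      exact Nat.findGreatest_is_greatest h1 (by omega)
  -- interior non-colliders between k and t are in M
  have hnc : ∀ r, k < r → r < t → ¬ IsCollider E f r → f r ∈ M := by
    intro r h1 h2 hcol
    have h3 := (hint r (by omega) (by omega)).1 hcol
    have h4 : f r ∈ P ∪ Q ∪ M := Set.notMem_compl_iff.mp h3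
    rcases h4 with (h4 | h4) | h4
    · exact absurd h4 (hkmax r h1 h2)
    · exact absurd h4 (htmin r h2)
    · exact h4
  -- interior colliders are never in M
  have hc : ∀ r, 0 < r → r < m → IsCollider E f r → f r ∉ M := by
    intro r h0 hm hcol hM
    rcases (hint r h0 hm).2 hcol with hC | ⟨w, hw, hdw⟩
    · exact hC (Set.mem_union_right _ hM)
    · exact hw (Set.mem_union_right _ (hclosed _ hM _ hdw))
  -- directed ray inside M must reach f t, contradiction
  have ray : ∀ d r, r + d = t → k < r → f r ∈ M → E (f (r - 1)) (f r) → False := by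
    intro d
    induction d with
    | zero =>
      intro r hrt _ hM _
      have : r = t := by omega
      subst this
      exact hQM _ ht hM
    | succ d ih =>
      intro r hrt hkr hM hE
      have hrm : r < m := by omega
      have hnotcol : ¬ IsCollider E f r := fun hcol => hc r (by omega) hrm hcol hM
      have h2 : ¬ E (f (r + 1)) (f r) := fun h => hnotcol ⟨hE, h⟩
      have hE' : E (f r) (f (r + 1)) := (hstep r hrm).resolve_right h2
      have hM' : f (r + 1) ∈ M := hclosed _ hM _ (Relation.TransGen.single hE')
      have hE'' : E (f (r + 1 - 1)) (f (r + 1)) := by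
        rw [show r + 1 - 1 = r from by omega]; exact hE'
      exact ih (r + 1) (by omega) (by omega) hM' hE''
  rcases Nat.lt_or_ge (k + 1) t with hkt2 | hkt1
  · -- t ≥ k + 2
    by_cases hcol1 : IsCollider E f (k + 1)
    · have hM1 : f (k + 1) ∉ M := hc (k + 1) (by omega) (by omega) hcol1
      obtain ⟨hEl, hEr⟩ := hcol1
      rw [show k + 1 - 1 = k from by omega] at hEl
      rcases eq_or_lt_of_le (show k + 2 ≤ t by omega) with heq | hlt
      · -- t = k + 2 : common child of f k and f t
        have htQ : f (k + 1 + 1) ∈ Q := by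
          rw [show k + 1 + 1 = t from by omega]; exact ht
        exact hM1 (hcc _ hk _ htQ _ hEl hEr)
      · -- t ≥ k + 3
        by_cases hcol2 : IsCollider E f (k + 2)
        · obtain ⟨h21, _⟩ := hcol2
          rw [show k + 2 - 1 = k + 1 from by omega] at h21
          have hEr' : E (f (k + 2)) (f (k + 1)) := by
            rw [show k + 2 = k + 1 + 1 from by omega]; exact hEr
          exact hdag (f (k + 1))
            (Relation.TransGen.head h21 (Relation.TransGen.single hEr'))
        · have hM2 : f (k + 2) ∈ M := hnc (k + 2) (by omega) hlt hcol2
          have hEr' : E (f (k + 2)) (f (k + 1)) := by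
            rw [show k + 2 = k + 1 + 1 from by omega]; exact hEr
          exact hM1 (hclosed _ hM2 _ (Relation.TransGen.single hEr'))
    · have hM1 : f (k + 1) ∈ M := hnc (k + 1) (by omega) hkt2 hcol1
      have hEd : E (f k) (f (k + 1)) := by
        rcases hstep k (by omega) with h | h
        · exact h
        · exact absurd (hclosed _ hM1 _ (Relation.TransGen.single h)) (hPM _ hk)
      have hEd' : E (f (k + 1 - 1)) (f (k + 1)) := by
        rw [show k + 1 - 1 = k from by omega]; exact hEd
      exact ray (t - (k + 1)) (k + 1) (by omega) (by omega) hM1 hEd'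
  · -- t = k + 1 : adjacency between f k ∈ P and f t ∈ Q
    have hteq : t = k + 1 := by omega
    have := hstep k (by omega)
    rw [show k + 1 = t from by omega] at this
    exact hadj _ hk _ ht this

/-- Bound on the size of a bounded union. -/
private lemma ncard_biUnion_le' {α β : Type*} [Fintype β] {T : Set α} (hT : T.Finite)
    {g : α → Set β} {K : ℕ} :
    (∀ b ∈ T, (g b).ncard ≤ K) → (⋃ b ∈ T, g b).ncard ≤ T.ncard * K := by
  refine Set.Finite.induction_on _ hT (by simp) ?_
  intro a s ha hs ih hg
  rw [Set.biUnion_insert]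
  calc (g a ∪ ⋃ b ∈ s, g b).ncard ≤ (g a).ncard + (⋃ b ∈ s, g b).ncard :=
        Set.ncard_union_le _ _
    _ ≤ K + s.ncard * K :=
        add_le_add (hg a (Set.mem_insert _ _)) (ih fun b hb => hg b (Set.mem_insert_of_mem _ hb))
    _ = (insert a s).ncard * K := by
        rw [Set.ncard_insert_of_notMem ha hs]; ring

/-- The conflict neighborhood of `b` (minus `b` itself) has at most `Δ²` elements. -/
private lemma conf_nbhd_bound {V : Type*} [Fintype V] (E : V → V → Prop) (Δ : ℕ)
    (hdeg : ∀ v : V, ({w | E w v}.ncard + {w | E v w}.ncard) ≤ Δ) (b : V) :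
    ({a | UndirAdj E a b ∨ ∃ c, E a c ∧ E b c} \ {b}).ncard ≤ Δ ^ 2 := by
  classical
  have hsub : {a | UndirAdj E a b ∨ ∃ c, E a c ∧ E b c} \ {b} ⊆
      {w | E w b} ∪ ⋃ c ∈ {c | E b c}, ({c} ∪ ({w | E w c} \ {b})) := by
    rintro a ⟨hm, hab⟩
    have hab' : a ≠ b := hab
    rcases hm with (h | h) | ⟨c, h1, h2⟩
    · exact Or.inl h
    · refine Or.inr (Set.mem_biUnion h ?_)
      exact Or.inl rfl
    · refine Or.inr (Set.mem_biUnion h2 ?_)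
      exact Or.inr ⟨h1, hab'⟩
  rcases Nat.eq_zero_or_pos Δ with hΔ | hΔ
  · subst hΔ
    have h0 := hdeg b
    have h1 : ({w | E w b} : Set V).ncard = 0 := by omega
    have h2 : ({w | E b w} : Set V).ncard = 0 := by omega
    have h1' : ({w | E w b} : Set V) = ∅ := by
      rwa [Set.ncard_eq_zero (Set.toFinite _)] at h1
    have h2' : ({c | E b c} : Set V) = ∅ := by
      rwa [Set.ncard_eq_zero (Set.toFinite _)] at h2
    have : ({a | UndirAdj E a b ∨ ∃ c, E a c ∧ E b c} \ {b}).ncard ≤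
        ({w | E w b} ∪ ⋃ c ∈ {c | E b c}, ({c} ∪ ({w | E w c} \ {b}))).ncard :=
      Set.ncard_le_ncard hsub (Set.toFinite _)
    rw [h1', h2'] at this
    simpa using this
  · -- per-child bound
    have hpiece : ∀ c ∈ {c | E b c}, (({c} : Set V) ∪ ({w | E w c} \ {b})).ncard ≤ Δ := by
      intro c hc
      have hble : b ∈ {w | E w c} := hc
      have h1 : ({w | E w c} \ {b}).ncard = {w | E w c}.ncard - 1 :=
        Set.ncard_diff_singleton_of_mem hble
      have h2 : ({w | E w c} : Set V).ncard ≤ Δ := by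
        have := hdeg c; omega
      calc (({c} : Set V) ∪ ({w | E w c} \ {b})).ncard
          ≤ ({c} : Set V).ncard + ({w | E w c} \ {b}).ncard := Set.ncard_union_le _ _
        _ ≤ 1 + (Δ - 1) := by
            rw [Set.ncard_singleton, h1]
            have : ({w | E w c} : Set V).ncard - 1 ≤ Δ - 1 := by omega
            omega
        _ ≤ Δ := by omega
    have hbu : (⋃ c ∈ {c | E b c}, (({c} : Set V) ∪ ({w | E w c} \ {b}))).ncard ≤
        ({c | E b c} : Set V).ncard * Δ :=
      ncard_biUnion_le' (Set.toFinite _) hpiece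
    have hdb := hdeg b
    calc ({a | UndirAdj E a b ∨ ∃ c, E a c ∧ E b c} \ {b}).ncard
        ≤ ({w | E w b} ∪ ⋃ c ∈ {c | E b c}, ({c} ∪ ({w | E w c} \ {b}))).ncard :=
          Set.ncard_le_ncard hsub (Set.toFinite _)
      _ ≤ ({w | E w b} : Set V).ncard +
          (⋃ c ∈ {c | E b c}, (({c} : Set V) ∪ ({w | E w c} \ {b}))).ncard :=
          Set.ncard_union_le _ _
      _ ≤ ({w | E w b} : Set V).ncard + ({c | E b c} : Set V).ncard * Δ := by omega
      _ ≤ Δ ^ 2 := by nlinarith [hdb, hΔ]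

/-- Lemma: enough non-common-descendants guarantee an IPA.
In a finite DAG of maximum degree `Δ`, for nonadjacent `vi, vj`, if the set
`A = V \ (DE(vi) ∩ DE(vj))` has at least `(2 + Δ²)(s + 1)` vertices (`s ≥ 1`),
then there is an IPA `(Si ∪ {vi}, Sj ∪ {vj})` of `(vi, vj)` with
`|Si| = |Sj| = s` whose two sides are contained in `A`. -/
theorem stmt_6 {V : Type*} [Fintype V] (E : V → V → Prop) (Δ : ℕ)
    (hdag : IsDAG E)
    (hdeg : ∀ v : V, ({w | E w v}.ncard + {w | E v w}.ncard) ≤ Δ)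
    (vi vj : V) (hne : vi ≠ vj) (hnadj : ¬ UndirAdj E vi vj)
    (Aij : Set V) (hAij : Aij = {v : V | ¬ (Descend E vi v ∧ Descend E vj v)})
    (s : ℕ) (hs : 1 ≤ s)
    (hcard : (2 + Δ ^ 2) * (s + 1) ≤ Aij.ncard) :
    ∃ Si Sj : Set V, Si.ncard = s ∧ Sj.ncard = s ∧
      IsIPA E vi vj Si Sj ∧
      Si ∪ {vi} ⊆ Aij ∧ Sj ∪ {vj} ⊆ Aij := by
  classical
  set N : V → Set V := fun b => {a | UndirAdj E a b ∨ ∃ c, E a c ∧ E b c} with hN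
  have hNb : ∀ b, (N b \ {b}).ncard ≤ Δ ^ 2 := fun b => conf_nbhd_bound E Δ hdeg b
  have hviA : vi ∈ Aij := by
    rw [hAij]; exact fun h => hdag vi h.1
  have hvjA : vj ∈ Aij := by
    rw [hAij]; exact fun h => hdag vj h.2
  -- first pick Sj avoiding conflicts with vi
  set B1 : Set V := insert vi (insert vj (N vi \ {vi})) with hB1
  have hB1card : B1.ncard ≤ 2 + Δ ^ 2 := by
    calc B1.ncard ≤ (insert vj (N vi \ {vi})).ncard + 1 := Set.ncard_insert_le _ _
      _ ≤ (N vi \ {vi}).ncard + 1 + 1 := by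
          have := Set.ncard_insert_le vj (N vi \ {vi}); omega
      _ ≤ 2 + Δ ^ 2 := by have := hNb vi; omega
  have hA1 : s ≤ (Aij \ B1).ncard := by
    have hle : Aij.ncard ≤ (Aij \ B1).ncard + B1.ncard := by
      calc Aij.ncard ≤ ((Aij \ B1) ∪ B1).ncard := by
            refine Set.ncard_le_ncard (fun x hx => ?_) (Set.toFinite _)
            by_cases h : x ∈ B1
            · exact Or.inr h
            · exact Or.inl ⟨hx, h⟩
        _ ≤ (Aij \ B1).ncard + B1.ncard := Set.ncard_union_le _ _
    nlinarith [hcard, hB1card, hle]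
  obtain ⟨Sj, hSjsub, hSjcard⟩ := Set.exists_subset_card_eq hA1
  -- then pick Si avoiding conflicts with Sj ∪ {vj}
  set X : Set V :=
    insert vi (insert vj (Sj ∪ ⋃ b ∈ insert vj Sj, (N b \ {b}))) with hX
  have hXcard : X.ncard ≤ 2 + s + (s + 1) * Δ ^ 2 := by
    have hbu : (⋃ b ∈ insert vj Sj, (N b \ {b})).ncard ≤ (insert vj Sj).ncard * Δ ^ 2 :=
      ncard_biUnion_le' (Set.toFinite _) (fun b _ => hNb b)
    have hins : (insert vj Sj).ncard ≤ s + 1 := by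
      have := Set.ncard_insert_le vj Sj; omega
    have hbu' : (⋃ b ∈ insert vj Sj, (N b \ {b})).ncard ≤ (s + 1) * Δ ^ 2 :=
      le_trans hbu (Nat.mul_le_mul_right _ hins)
    have hu : (Sj ∪ ⋃ b ∈ insert vj Sj, (N b \ {b})).ncard ≤ s + (s + 1) * Δ ^ 2 := by
      have := Set.ncard_union_le Sj (⋃ b ∈ insert vj Sj, (N b \ {b}))
      omega
    calc X.ncard ≤ (insert vj (Sj ∪ ⋃ b ∈ insert vj Sj, (N b \ {b}))).ncard + 1 :=
          Set.ncard_insert_le _ _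
      _ ≤ (Sj ∪ ⋃ b ∈ insert vj Sj, (N b \ {b})).ncard + 1 + 1 := by
          have := Set.ncard_insert_le vj (Sj ∪ ⋃ b ∈ insert vj Sj, (N b \ {b})); omega
      _ ≤ 2 + s + (s + 1) * Δ ^ 2 := by omega
  have hA2 : s ≤ (Aij \ X).ncard := by
    have hle : Aij.ncard ≤ (Aij \ X).ncard + X.ncard := by
      calc Aij.ncard ≤ ((Aij \ X) ∪ X).ncard := by
            refine Set.ncard_le_ncard (fun x hx => ?_) (Set.toFinite _)
            by_cases h : x ∈ X
            · exact Or.inr h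
            · exact Or.inl ⟨hx, h⟩
        _ ≤ (Aij \ X).ncard + X.ncard := Set.ncard_union_le _ _
    nlinarith [hcard, hXcard, hle]
  obtain ⟨Si, hSisub, hSicard⟩ := Set.exists_subset_card_eq hA2
  -- basic membership facts
  have hSiA : Si ⊆ Aij := fun x hx => (hSisub hx).1
  have hSjA : Sj ⊆ Aij := fun x hx => (hSjsub hx).1
  have hSiX : ∀ a ∈ Si, a ∉ X := fun a ha => (hSisub ha).2
  have hSjB1 : ∀ b ∈ Sj, b ∉ B1 := fun b hb => (hSjsub hb).2
  have hviX : vi ∈ X := Set.mem_insert _ _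
  have hvjX : vj ∈ X := Set.mem_insert_of_mem _ (Set.mem_insert _ _)
  have hSjX : Sj ⊆ X := fun b hb =>
    Set.mem_insert_of_mem _ (Set.mem_insert_of_mem _ (Or.inl hb))
  have hviB1 : vi ∈ B1 := Set.mem_insert _ _
  have hvjB1 : vj ∈ B1 := Set.mem_insert_of_mem _ (Set.mem_insert _ _)
  have hviSi : vi ∉ Si := fun h => hSiX _ h hviX
  have hvjSi : vj ∉ Si := fun h => hSiX _ h hvjX
  have hviSj : vi ∉ Sj := fun h => hSjB1 _ h hviB1
  have hvjSj : vj ∉ Sj := fun h => hSjB1 _ h hvjB1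
  have hdisjij : Disjoint Si Sj := Set.disjoint_left.mpr fun a ha hb => hSiX a ha (hSjX hb)
  -- set up the three sets for the blocking lemma
  set P : Set V := Si ∪ {vi} with hP
  set Q : Set V := Sj ∪ {vj} with hQ
  set M : Set V := IMD E vi vj with hM
  have hPA : P ⊆ Aij := by
    rintro x (hx | hx)
    · exact hSiA hx
    · rw [hx]; exact hviA
  have hQA : Q ⊆ Aij := by
    rintro x (hx | hx)
    · exact hSjA hx
    · rw [hx]; exact hvjA
  have hMA : ∀ v ∈ M, v ∉ Aij := by
    intro v hv hvA
    rw [hAij] at hvA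
    rcases hv with ⟨h1, h2⟩ | ⟨c, h1, h2, hd⟩
    · exact hvA ⟨Relation.TransGen.single h1, Relation.TransGen.single h2⟩
    · exact hvA ⟨Relation.TransGen.head h1 hd, Relation.TransGen.head h2 hd⟩
  have hclosed : ∀ u ∈ M, ∀ w, Descend E u w → w ∈ M := by
    intro u hu w hw
    rcases hu with ⟨h1, h2⟩ | ⟨c, h1, h2, hd⟩
    · exact Or.inr ⟨u, h1, h2, hw⟩
    · exact Or.inr ⟨c, h1, h2, hd.trans hw⟩
  have hPM : ∀ v ∈ P, v ∉ M := fun v hv hm => hMA v hm (hPA hv)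
  have hQM : ∀ v ∈ Q, v ∉ M := fun v hv hm => hMA v hm (hQA hv)
  have hPQ : ∀ v ∈ P, v ∉ Q := by
    rintro v (hv | hv) (hw | hw)
    · exact hSiX v hv (hSjX hw)
    · exact absurd hv (hw ▸ hvjSi)
    · exact absurd hw (hv ▸ hviSj)
    · exact hne (hv.symm.trans hw)
  -- no cross conflicts except the pair (vi, vj)
  have hnoconf : ∀ a ∈ P, ∀ b ∈ Q, (a = vi ∧ b = vj) ∨ a ∉ N b := by
    rintro a (ha | ha) b hb
    · -- a ∈ Si
      right
      intro hNab
      have hbX : b ∈ X := by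
        rcases hb with hb | hb
        · exact hSjX hb
        · rw [hb]; exact hvjX
      have hab : a ≠ b := fun h => hSiX a ha (h ▸ hbX)
      have hbins : b ∈ insert vj Sj := by
        rcases hb with hb | hb
        · exact Set.mem_insert_of_mem _ hb
        · rw [hb]; exact Set.mem_insert _ _
      have : a ∈ X := Set.mem_insert_of_mem _ (Set.mem_insert_of_mem _
        (Or.inr (Set.mem_biUnion hbins ⟨hNab, hab⟩)))
      exact hSiX a ha this
    · -- a = vi
      rcases hb with hb | hb
      · -- b ∈ Sj
        right
        intro hNab
        have hbvi : b ≠ vi := fun h => hSjB1 b hb (h ▸ hviB1)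
        have hbNvi : b ∈ N vi := conf_symm E (ha ▸ hNab)
        exact hSjB1 b hb (Set.mem_insert_of_mem _
          (Set.mem_insert_of_mem _ ⟨hbNvi, hbvi⟩))
      · exact Or.inl ⟨ha, hb⟩
  have hadj : ∀ a ∈ P, ∀ b ∈ Q, ¬ UndirAdj E a b := by
    intro a ha b hb hu
    rcases hnoconf a ha b hb with ⟨h1, h2⟩ | h
    · exact hnadj (h1 ▸ h2 ▸ hu)
    · exact h (Or.inl hu)
  have hcc : ∀ a ∈ P, ∀ b ∈ Q, ∀ c, E a c → E b c → c ∈ M := by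
    intro a ha b hb c h1 h2
    rcases hnoconf a ha b hb with ⟨ha', hb'⟩ | h
    · exact Or.inl ⟨ha' ▸ h1, hb' ▸ h2⟩
    · exact absurd (Or.inr ⟨c, h1, h2⟩) h
  refine ⟨Si, Sj, hSicard, hSjcard, ⟨hdisjij, hviSi, hvjSi, hviSj, hvjSj,
    ⟨(P ∪ Q ∪ M)ᶜ, ?_, ?_⟩⟩, ?_, ?_⟩
  · exact Set.disjoint_left.mpr fun x hx hx' => hx (Set.mem_union_left _ hx')
  · exact blocked_dsep E hdag P Q M hPQ hPM hQM hclosed hadj hcc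
  · exact hPA
  · exact hQA
end

section
/- Let V be a finite set and E a relation on V whose transitive closure is irreflexive (i.e., (V, E) is a finite DAG), and for v ∈ V let DE(v) be the set of vertices reachable from v by a directed path of length ≥ 1. Then for every integer m ≥ 1, the set H = {v ∈ V : |V \ DE(v)| < m} satisfies |H| < m. -/
/-- Observation: few `early vertices`.
In a finite DAG (edge relation `E` with irreflexive transitive closure), letting
`DE(v) = {w | v →⁺ w}` be the descendants of `v`, for every `m ≥ 1` the set of
vertices with fewer than `m` non-descendants has fewer than `m` elements. -/
theorem stmt_8 {V : Type*} [Fintype V] (E : V → V → Prop)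
    (hdag : Irreflexive (Relation.TransGen E)) (m : ℕ) (hm : 1 ≤ m) :
    {v : V | ((Set.univ : Set V) \ {w | Relation.TransGen E v w}).ncard < m}.ncard < m := by
  set r := Relation.TransGen E with hr
  set H : Set V := {v : V | ((Set.univ : Set V) \ {w | r v w}).ncard < m} with hH
  by_cases hne : H.Nonempty
  · -- flip r is transitive and irreflexive, hence well-founded on a finite type
    have htrans : Transitive (flip r) := fun a b c hab hbc => hbc.trans hab
    have hirr : Irreflexive (flip r) := fun a h => hdag a h
    have : IsTrans V (flip r) := ⟨htrans⟩
    have : IsIrrefl V (flip r) := ⟨hirr⟩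
    have hwf : WellFounded (flip r) := Finite.wellFounded_of_trans_of_irrefl (flip r)
    obtain ⟨v, hvH, hvmax⟩ := hwf.has_min H hne
    have hsub : H ⊆ (Set.univ : Set V) \ {w | r v w} := by
      intro u huH
      exact ⟨trivial, fun hru => hvmax u huH hru⟩
    calc H.ncard ≤ ((Set.univ : Set V) \ {w | r v w}).ncard :=
          Set.ncard_le_ncard hsub (Set.toFinite _)
      _ < m := hvH
  · rw [Set.not_nonempty_iff_eq_empty] at hne
    rw [hne, Set.ncard_empty]
    exact hm
end
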